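/- Let ε' > 0 and 0 < δ' < 1. If U ~ Lap(4/ε') and V ~ Lap(2/ε') are independent Laplace random variables centered at 0, then P( U > (4/ε') log(1/δ') + V ) < δ'. -/

import Mathlib

open MeasureTheory

private lemma expIoi (b c : ℝ) (hb : 0 < b) :
    ∫ x in Set.Ioi c, Real.exp (-(b * x)) = Real.exp (-(b * c)) / b := by
  have h := MeasureTheory.integral_comp_mul_left_Ioi (fun y => Real.exp (-y)) c hb
  simp only [smul_eq_mul] at h
  rw [integral_exp_neg_Ioi] at h
  rw [h]; ring

private lemma expIoiInt (b c : ℝ) (hb : 0 < b) :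
    IntegrableOn (fun x => Real.exp (-(b * x))) (Set.Ioi c) := by
  simpa [neg_mul] using exp_neg_integrableOn_Ioi c hb

private lemma expIicInt (b : ℝ) (hb : 0 < b) :
    IntegrableOn (fun x => Real.exp (b * x)) (Set.Iic (0 : ℝ)) := by
  rw [← (Measure.measurePreserving_neg (volume : Measure ℝ)).integrableOn_comp_preimage
      (Homeomorph.neg ℝ).measurableEmbedding]
  simp only [Function.comp_def, Set.neg_preimage, Set.neg_Iic, neg_zero, mul_neg]
  have := (integrableOn_Ici_iff_integrableOn_Ioi (f := fun x => Real.exp (-(b * x))) (b := 0)).mpr (expIoiInt b 0 hb)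
  simpa [mul_neg, neg_mul] using this

private lemma expIicVal (b : ℝ) (hb : 0 < b) :
    ∫ x in Set.Iic (0 : ℝ), Real.exp (b * x) = 1 / b := by
  have h := integral_comp_neg_Iic (0 : ℝ) (fun y => Real.exp (-(b * y)))
  simp only [neg_neg, mul_neg, neg_zero] at h ⊢
  rw [show (fun x => Real.exp (b * x)) = (fun x => Real.exp (-(b * -x))) by
      funext x; ring_nf] at *
  rw [show ∫ x in Set.Iic (0:ℝ), Real.exp (-(b * -x)) = ∫ x in Set.Ioi (-(0:ℝ)), Real.exp (-(b*x))
      from by simpa [mul_neg] using h]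
  rw [neg_zero, expIoi b 0 hb]
  simp

private lemma exp_combine {c d x y z w : ℝ} (h1 : c = d) (h2 : x + y = z + w) :
    c * (Real.exp x * Real.exp y) = d * (Real.exp z * Real.exp w) := by
  rw [← Real.exp_add, ← Real.exp_add, h1, h2]

/-- If `U ~ Lap(4/ε')` and `V ~ Lap(2/ε')` are independent centered Laplace random variables,
then `P(U > (4/ε') log(1/δ') + V) < δ'`, expressed via the Laplace densities. -/
theorem stmt_3 (ε' δ' : ℝ) (hε : 0 < ε') (hδ0 : 0 < δ') (hδ1 : δ' < 1) :
    (∫ v : ℝ, (ε' / 4) * Real.exp (-|v| * ε' / 2) *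
      (∫ u in Set.Ioi ((4 / ε') * Real.log (1 / δ') + v),
        (ε' / 8) * Real.exp (-|u| * ε' / 4))) < δ' := by
  set a : ℝ := ε' / 4 with ha_def
  have ha : 0 < a := by positivity
  set T : ℝ := (4 / ε') * Real.log (1 / δ') with hT_def
  have haT : Real.exp (-(a * T)) = δ' := by
    have : a * T = Real.log (1 / δ') := by
      rw [ha_def, hT_def]; field_simp
    rw [this, Real.log_div one_ne_zero hδ0.ne', Real.log_one]
    simp [Real.exp_log hδ0]
  -- inner bound
  have hinner : ∀ t : ℝ, (∫ u in Set.Ioi t, (ε' / 8) * Real.exp (-|u| * ε' / 4))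
      ≤ (1 / 2) * Real.exp (-(a * t)) := by
    intro t
    have hg : Integrable (fun u => (a / 2) * Real.exp (-(a * u)))
        (volume.restrict (Set.Ioi t)) := (expIoiInt a t ha).const_mul _
    have hle : (∫ u in Set.Ioi t, (ε' / 8) * Real.exp (-|u| * ε' / 4))
        ≤ ∫ u in Set.Ioi t, (a / 2) * Real.exp (-(a * u)) := by
      refine integral_mono_of_nonneg (Filter.Eventually.of_forall fun u => by positivity) hg
        (Filter.Eventually.of_forall fun u => ?_)
      dsimp only
      have h1 : -|u| * ε' / 4 = -(a * |u|) := by rw [ha_def]; ring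
      rw [h1, show (ε' / 8 : ℝ) = a / 2 by rw [ha_def]; ring]
      have hmono : Real.exp (-(a * |u|)) ≤ Real.exp (-(a * u)) := by
        apply Real.exp_le_exp.mpr
        have := mul_le_mul_of_nonneg_left (le_abs_self u) ha.le
        linarith
      exact mul_le_mul_of_nonneg_left hmono (by positivity)
    calc (∫ u in Set.Ioi t, (ε' / 8) * Real.exp (-|u| * ε' / 4))
        ≤ ∫ u in Set.Ioi t, (a / 2) * Real.exp (-(a * u)) := hle
      _ = (a / 2) * (Real.exp (-(a * t)) / a) := by
          rw [integral_const_mul, expIoi a t ha]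
      _ = (1 / 2) * Real.exp (-(a * t)) := by field_simp
  -- the dominating function
  set C : ℝ := (a / 2) * Real.exp (-(a * T)) with hC_def
  have hC : 0 < C := by positivity
  set h : ℝ → ℝ := fun v => (ε' / 4) * Real.exp (-|v| * ε' / 2) *
      ((1 / 2) * Real.exp (-(a * (T + v)))) with hh_def
  have hEqIic : Set.EqOn h (fun v => C * Real.exp (a * v)) (Set.Iic (0 : ℝ)) := by
    intro v hv
    simp only [hh_def, hC_def]
    rw [abs_of_nonpos (Set.mem_Iic.mp hv)]
    calc (ε' / 4) * Real.exp (- -v * ε' / 2) * ((1 / 2) * Real.exp (-(a * (T + v))))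
        = (ε' / 8) * (Real.exp (- -v * ε' / 2) * Real.exp (-(a * (T + v)))) := by ring
      _ = (a / 2) * (Real.exp (-(a * T)) * Real.exp (a * v)) :=
          exp_combine (by rw [ha_def]; ring) (by rw [ha_def]; ring)
      _ = (a / 2) * Real.exp (-(a * T)) * Real.exp (a * v) := by ring
  have hEqIoi : Set.EqOn h (fun v => C * Real.exp (-(3 * a * v))) (Set.Ioi (0 : ℝ)) := by
    intro v hv
    simp only [hh_def, hC_def]
    rw [abs_of_pos (Set.mem_Ioi.mp hv)]
    calc (ε' / 4) * Real.exp (-v * ε' / 2) * ((1 / 2) * Real.exp (-(a * (T + v))))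
        = (ε' / 8) * (Real.exp (-v * ε' / 2) * Real.exp (-(a * (T + v)))) := by ring
      _ = (a / 2) * (Real.exp (-(a * T)) * Real.exp (-(3 * a * v))) :=
          exp_combine (by rw [ha_def]; ring) (by rw [ha_def]; ring)
      _ = (a / 2) * Real.exp (-(a * T)) * Real.exp (-(3 * a * v)) := by ring
  have hIic : IntegrableOn h (Set.Iic (0 : ℝ)) :=
    IntegrableOn.congr_fun ((expIicInt a ha).const_mul C) hEqIic.symm measurableSet_Iic
  have hIoi : IntegrableOn h (Set.Ioi (0 : ℝ)) :=
    IntegrableOn.congr_fun ((expIoiInt (3 * a) 0 (by positivity)).const_mul C) hEqIoi.symm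
      measurableSet_Ioi
  have hInt : Integrable h := by
    rw [← integrableOn_univ, ← Set.Iic_union_Ioi (a := (0 : ℝ))]
    exact hIic.union hIoi
  have hval : (∫ v, h v) = (2 / 3) * δ' := by
    rw [← intervalIntegral.integral_Iic_add_Ioi hIic hIoi]
    rw [setIntegral_congr_fun measurableSet_Iic hEqIic,
        setIntegral_congr_fun measurableSet_Ioi hEqIoi]
    rw [integral_const_mul, integral_const_mul, expIicVal a ha, expIoi (3 * a) 0 (by positivity)]
    rw [mul_zero, neg_zero, Real.exp_zero, hC_def, haT]
    field_simp
    ring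
  have hmono : (∫ v : ℝ, (ε' / 4) * Real.exp (-|v| * ε' / 2) *
      (∫ u in Set.Ioi (T + v), (ε' / 8) * Real.exp (-|u| * ε' / 4))) ≤ ∫ v, h v := by
    refine integral_mono_of_nonneg (Filter.Eventually.of_forall fun v => ?_) hInt
      (Filter.Eventually.of_forall fun v => ?_)
    · have : (0 : ℝ) ≤ ∫ u in Set.Ioi (T + v), (ε' / 8) * Real.exp (-|u| * ε' / 4) :=
        integral_nonneg fun u => by positivity
      positivity
    · exact mul_le_mul_of_nonneg_left (hinner (T + v)) (by positivity)
  calc (∫ v : ℝ, (ε' / 4) * Real.exp (-|v| * ε' / 2) *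
      (∫ u in Set.Ioi (T + v), (ε' / 8) * Real.exp (-|u| * ε' / 4)))
      ≤ ∫ v, h v := hmono
    _ = (2 / 3) * δ' := hval
    _ < δ' := by linarith
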